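/- Let A and B be commutative rings. If the direct product ring A × B is perinormal, then A is perinormal. -/

import Mathlib

/-- Going down for a ring homomorphism. -/
def GoingDown {R S : Type*} [CommRing R] [CommRing S] (f : R →+* S) : Prop :=
  ∀ (P₁ P₂ : Ideal R), P₁.IsPrime → P₂.IsPrime → P₁ ≤ P₂ →
    ∀ Q₂ : Ideal S, Q₂.IsPrime → Q₂.comap f = P₂ →
      ∃ Q₁ : Ideal S, Q₁.IsPrime ∧ Q₁ ≤ Q₂ ∧ Q₁.comap f = P₁

/-- A ring is perinormal if every going-down overring is flat. -/
def Perinormal (A : Type*) [CommRing A] : Prop :=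
  ∀ B : Subalgebra A (Localization (nonZeroDivisors A)),
    GoingDown (algebraMap A B) → Module.Flat A B


lemma mem_nonZeroDivisors_prod {A B : Type*} [CommRing A] [CommRing B] {x : A × B} :
    x ∈ nonZeroDivisors (A × B) ↔ x.1 ∈ nonZeroDivisors A ∧ x.2 ∈ nonZeroDivisors B := by
  simp only [mem_nonZeroDivisors_iff_right]
  constructor
  · intro h
    refine ⟨fun y hy => ?_, fun y hy => ?_⟩
    · have := h (y, 0) (by ext <;> simp [hy])
      simpa using congrArg Prod.fst this
    · have := h (0, y) (by ext <;> simp [hy])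
      simpa using congrArg Prod.snd this
  · rintro ⟨h1, h2⟩ ⟨y1, y2⟩ hy
    have e1 := congrArg Prod.fst hy
    have e2 := congrArg Prod.snd hy
    simp only [Prod.fst_mul, Prod.snd_mul] at e1 e2
    ext
    · exact h1 _ e1
    · exact h2 _ e2

lemma comap_prodMap_prod {A B C D : Type*} [CommRing A] [CommRing B] [CommRing C] [CommRing D]
    (f : A →+* C) (g : B →+* D) (I : Ideal C) (J : Ideal D) :
    (Ideal.prod I J).comap (f.prodMap g) = Ideal.prod (I.comap f) (J.comap g) := rfl

lemma goingDown_comp_equiv {R S T : Type*} [CommRing R] [CommRing S] [CommRing T]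
    {f : R →+* S} (hf : GoingDown f) (e : S ≃+* T) :
    GoingDown ((e : S →+* T).comp f) := by
  intro P₁ P₂ h₁ h₂ hle Q₂ hQ₂ hcomap
  haveI := hQ₂
  have hQ₂' : (Q₂.comap (e : S →+* T)).IsPrime := Ideal.IsPrime.comap _
  rw [← Ideal.comap_comap] at hcomap
  obtain ⟨Q₁, hQ₁, hle', hc⟩ := hf P₁ P₂ h₁ h₂ hle (Q₂.comap (e : S →+* T)) hQ₂' hcomap
  haveI := hQ₁
  refine ⟨Q₁.comap (e.symm : T →+* S), Ideal.IsPrime.comap _, ?_, ?_⟩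
  · intro x hx
    have hx' : (e : S →+* T) (e.symm x) ∈ Q₂ := hle' hx
    simpa using hx'
  · rw [← Ideal.comap_comap]
    have : (Q₁.comap (e.symm : T →+* S)).comap (e : S →+* T) = Q₁ := by
      ext x; simp [Ideal.mem_comap]
    rw [this, hc]

lemma goingDown_prodMap {A B C : Type*} [CommRing A] [CommRing B] [CommRing C]
    {f : A →+* C} (hf : GoingDown f) :
    GoingDown (f.prodMap (RingHom.id B)) := by
  intro P₁ P₂ h₁ h₂ hle Q₂ hQ₂ hcomap
  rcases (Ideal.ideal_prod_prime Q₂).mp hQ₂ with ⟨q, hq, rfl⟩ | ⟨q, hq, rfl⟩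
  · rw [comap_prodMap_prod, Ideal.comap_top] at hcomap
    subst hcomap
    have hqc : (q.comap f).IsPrime := Ideal.IsPrime.comap _
    rcases (Ideal.ideal_prod_prime P₁).mp h₁ with ⟨p₁, hp₁, rfl⟩ | ⟨p₁, hp₁, rfl⟩
    · have hple : p₁ ≤ q.comap f := fun x hx =>
        (hle (show ((x, (0 : B)) : A × B) ∈ Ideal.prod p₁ ⊤ from ⟨hx, trivial⟩)).1
      obtain ⟨q₁, hq₁, hq₁le, hq₁c⟩ := hf p₁ (q.comap f) hp₁ hqc hple q hq rfl
      haveI := hq₁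
      refine ⟨Ideal.prod q₁ ⊤, Ideal.isPrime_ideal_prod_top, ?_, ?_⟩
      · rintro ⟨x, y⟩ ⟨hx, -⟩
        exact ⟨hq₁le hx, trivial⟩
      · rw [comap_prodMap_prod, hq₁c, Ideal.comap_top]
    · have : ((1 : A), (0 : B)) ∈ Ideal.prod (⊤ : Ideal A) p₁ := ⟨trivial, p₁.zero_mem⟩
      have h1 : (1 : A) ∈ q.comap f := (hle this).1
      exact absurd ((Ideal.eq_top_iff_one _).mpr h1) hqc.ne_top
  · rw [comap_prodMap_prod, Ideal.comap_top, Ideal.comap_id] at hcomap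
    subst hcomap
    rcases (Ideal.ideal_prod_prime P₁).mp h₁ with ⟨p₁, hp₁, rfl⟩ | ⟨q₁, hq₁, rfl⟩
    · have : ((0 : A), (1 : B)) ∈ Ideal.prod p₁ (⊤ : Ideal B) := ⟨p₁.zero_mem, trivial⟩
      have h1 : (1 : B) ∈ q := (hle this).2
      exact absurd ((Ideal.eq_top_iff_one _).mpr h1) hq.ne_top
    · haveI := hq₁
      refine ⟨Ideal.prod ⊤ q₁, Ideal.isPrime_ideal_prod_top', ?_, ?_⟩
      · rintro ⟨x, y⟩ ⟨-, hy⟩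
        exact ⟨trivial, (hle (show ((0 : A), y) ∈ Ideal.prod ⊤ q₁ from ⟨trivial, hy⟩)).2⟩
      · rw [comap_prodMap_prod, Ideal.comap_top, Ideal.comap_id]

section ProdLoc

variable (A B : Type*) [CommRing A] [CommRing B]

noncomputable def prodLocAlgebra :
    Algebra (A × B)
      (Localization (nonZeroDivisors A) × Localization (nonZeroDivisors B)) :=
  ((algebraMap A (Localization (nonZeroDivisors A))).prodMap
    (algebraMap B (Localization (nonZeroDivisors B)))).toAlgebra

lemma isUnit_prod_of {M N : Type*} [Monoid M] [Monoid N] {a : M} {b : N}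
    (ha : IsUnit a) (hb : IsUnit b) : IsUnit (a, b) := by
  obtain ⟨u, rfl⟩ := ha
  obtain ⟨v, rfl⟩ := hb
  exact ⟨⟨Prod.mk (u : M) (v : N), Prod.mk ((u⁻¹ : Mˣ) : M) ((v⁻¹ : Nˣ) : N),
    by ext <;> simp, by ext <;> simp⟩, rfl⟩

lemma prodLoc_isLocalization :
    @IsLocalization (A × B) _ (nonZeroDivisors (A × B))
      (Localization (nonZeroDivisors A) × Localization (nonZeroDivisors B)) _
      (prodLocAlgebra A B) := by
  letI := prodLocAlgebra A B
  constructor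
  have halg : algebraMap (A × B)
      (Localization (nonZeroDivisors A) × Localization (nonZeroDivisors B)) =
      (algebraMap A (Localization (nonZeroDivisors A))).prodMap
        (algebraMap B (Localization (nonZeroDivisors B))) := rfl
  constructor
  · rintro ⟨⟨a, b⟩, hy⟩
    rw [mem_nonZeroDivisors_prod] at hy
    rw [halg]
    exact isUnit_prod_of
      (IsLocalization.map_units (Localization (nonZeroDivisors A)) ⟨a, hy.1⟩)
      (IsLocalization.map_units (Localization (nonZeroDivisors B)) ⟨b, hy.2⟩)
  · rintro ⟨x, y⟩
    obtain ⟨⟨ra, sa⟩, ha⟩ := IsLocalization.surj (nonZeroDivisors A) x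
    obtain ⟨⟨rb, sb⟩, hb⟩ := IsLocalization.surj (nonZeroDivisors B) y
    refine ⟨((ra, rb), ⟨((sa : A), (sb : B)),
      mem_nonZeroDivisors_prod.mpr ⟨sa.2, sb.2⟩⟩), ?_⟩
    rw [halg]
    exact Prod.ext ha hb
  · intro x y hxy
    rw [halg] at hxy
    obtain ⟨c, hc⟩ := IsLocalization.exists_of_eq
      (M := nonZeroDivisors A) (S := Localization (nonZeroDivisors A))
      (congrArg Prod.fst hxy)
    obtain ⟨d, hd⟩ := IsLocalization.exists_of_eq
      (M := nonZeroDivisors B) (S := Localization (nonZeroDivisors B))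
      (congrArg Prod.snd hxy)
    exact ⟨⟨((c : A), (d : B)), mem_nonZeroDivisors_prod.mpr ⟨c.2, d.2⟩⟩,
      Prod.ext hc hd⟩

end ProdLoc

section ProdOverring

variable (A B : Type*) [CommRing A] [CommRing B]

attribute [local instance] prodLocAlgebra
attribute [local instance] prodLoc_isLocalization

/-- The canonical equivalence between the total quotient ring of `A × B` and the
product of the total quotient rings. -/
noncomputable def prodLocEquiv :
    Localization (nonZeroDivisors (A × B)) ≃ₐ[A × B]
      (Localization (nonZeroDivisors A) × Localization (nonZeroDivisors B)) :=
  IsLocalization.algEquiv (nonZeroDivisors (A × B)) _ _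

variable (C : Subalgebra A (Localization (nonZeroDivisors A)))

/-- The overring of `A × B` corresponding to `C × B`. -/
noncomputable def prodOverring :
    Subalgebra (A × B) (Localization (nonZeroDivisors (A × B))) where
  carrier := {x | (prodLocEquiv A B x).1 ∈ C ∧
    (prodLocEquiv A B x).2 ∈ (algebraMap B (Localization (nonZeroDivisors B))).range}
  mul_mem' hx hy := ⟨by rw [map_mul]; exact C.mul_mem hx.1 hy.1,
    by rw [map_mul]; exact mul_mem hx.2 hy.2⟩
  add_mem' hx hy := ⟨by rw [map_add]; exact C.add_mem hx.1 hy.1,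
    by rw [map_add]; exact add_mem hx.2 hy.2⟩
  algebraMap_mem' r := ⟨by rw [(prodLocEquiv A B).commutes r]; exact C.algebraMap_mem r.1,
    by rw [(prodLocEquiv A B).commutes r]; exact ⟨r.2, rfl⟩⟩

lemma mem_prodOverring {x : Localization (nonZeroDivisors (A × B))} :
    x ∈ prodOverring A B C ↔ (prodLocEquiv A B x).1 ∈ C ∧
      (prodLocEquiv A B x).2 ∈ (algebraMap B (Localization (nonZeroDivisors B))).range :=
  Iff.rfl

end ProdOverring

set_option maxHeartbeats 1000000 in
set_option synthInstance.maxHeartbeats 100000 in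
theorem statement7 (A B : Type*) [CommRing A] [CommRing B]
    (h : Perinormal (A × B)) : Perinormal A := by
  classical
  intro C hC
  letI := prodLocAlgebra A B
  haveI := prodLoc_isLocalization A B
  let e := prodLocEquiv A B
  let D := prodOverring A B C
  have memD : ∀ x, x ∈ D ↔ (e x).1 ∈ C ∧
      (e x).2 ∈ (algebraMap B (Localization (nonZeroDivisors B))).range :=
    fun x => mem_prodOverring A B C
  -- the ring hom C × B →+* D
  let g0 : ↥C × B →+* Localization (nonZeroDivisors (A × B)) :=
    e.symm.toAlgHom.toRingHom.comp
      ((C.val.toRingHom).prodMap (algebraMap B (Localization (nonZeroDivisors B))))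
  have hg0 : ∀ p : ↥C × B, g0 p =
      e.symm ((p.1 : Localization (nonZeroDivisors A)),
        algebraMap B (Localization (nonZeroDivisors B)) p.2) := fun p => rfl
  have hg0mem : ∀ p, g0 p ∈ D := by
    intro p
    rw [memD, hg0, AlgEquiv.apply_symm_apply]
    exact ⟨p.1.2, ⟨p.2, rfl⟩⟩
  let g : ↥C × B →+* ↥D := g0.codRestrict D.toSubring hg0mem
  have hginj : Function.Injective g := by
    intro p q hpq
    have h0 : g0 p = g0 q := congrArg Subtype.val hpq
    rw [hg0, hg0] at h0
    have h1 := e.symm.injective h0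
    refine Prod.ext (Subtype.ext (congrArg Prod.fst h1)) ?_
    exact IsFractionRing.injective B (Localization (nonZeroDivisors B))
      (congrArg Prod.snd h1)
  have hgsurj : Function.Surjective g := by
    rintro ⟨d, hd⟩
    obtain ⟨hd1, b, hb⟩ := (memD d).mp hd
    refine ⟨(⟨(e d).1, hd1⟩, b), ?_⟩
    apply Subtype.ext
    show g0 (⟨(e d).1, hd1⟩, b) = d
    rw [hg0]
    simp only [hb]
    exact e.symm_apply_apply d
  let E : ↥C × B ≃+* ↥D := RingEquiv.ofBijective g ⟨hginj, hgsurj⟩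
  have key : (algebraMap (A × B) ↥D) =
      (E : ↥C × B →+* ↥D).comp ((algebraMap A ↥C).prodMap (RingHom.id B)) := by
    apply RingHom.ext
    rintro ⟨a, b⟩
    apply Subtype.ext
    show algebraMap (A × B) (Localization (nonZeroDivisors (A × B))) (a, b) =
      g0 (algebraMap A ↥C a, b)
    rw [hg0]
    have h2 : ((algebraMap A ↥C a : Localization (nonZeroDivisors A)),
        algebraMap B (Localization (nonZeroDivisors B)) b) =
        e (algebraMap (A × B) (Localization (nonZeroDivisors (A × B))) (a, b)) :=
      (e.commutes (a, b)).symm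
    rw [h2, AlgEquiv.symm_apply_apply]
  have hGD : GoingDown (R := A × B) (S := ↥D) (algebraMap (A × B) ↥D) := by
    rw [key]
    exact goingDown_comp_equiv (S := ↥C × B) (T := ↥D) (goingDown_prodMap hC) E
  haveI hFlat : Module.Flat (A × B) ↥D := h D hGD
  -- now transfer flatness to C over A
  letI : Algebra (A × B) A := (RingHom.fst A B).toAlgebra
  haveI hloc : IsLocalization (Submonoid.powers (((1 : A), (0 : B)) : A × B)) A := by
    constructor
    constructor
    · rintro ⟨y, hy⟩
      obtain ⟨n, rfl⟩ := hy
      have h3 : algebraMap (A × B) A ((((1 : A), (0 : B)) : A × B) ^ n) = 1 := by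
        show (RingHom.fst A B) ((((1 : A), (0 : B)) : A × B) ^ n) = 1
        rw [map_pow]
        simp
      have h3' : IsUnit (algebraMap (A × B) A ((((1 : A), (0 : B)) : A × B) ^ n)) := by
        rw [h3]; exact isUnit_one
      exact h3'
    · intro z
      refine ⟨((z, 0), 1), ?_⟩
      show z * (RingHom.fst A B) 1 = (RingHom.fst A B) (z, 0)
      simp
    · intro x y hxy
      refine ⟨⟨((1 : A), (0 : B)), Submonoid.mem_powers _⟩, ?_⟩
      have h4 : x.1 = y.1 := hxy
      ext
      · simpa using h4
      · simp
  haveI hTower : IsScalarTower (A × B) A ↥C :=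
    ⟨fun r a c => Subtype.ext (by
      rw [Subalgebra.coe_smul, Subalgebra.coe_smul, Subalgebra.coe_smul]
      exact smul_assoc r a (c : Localization (nonZeroDivisors A)))⟩
  have hsmulC : ∀ (r : A × B) (c : ↥C), r • c = r.1 • c := fun r c => by
    apply Subtype.ext
    rw [Subalgebra.coe_smul, Subalgebra.coe_smul]
    rw [Algebra.smul_def, Algebra.smul_def,
      IsScalarTower.algebraMap_apply (A × B) A (Localization (nonZeroDivisors A))]
    rfl
  have hsmulLA : ∀ (r : A × B) (v : Localization (nonZeroDivisors A)),
      r • v = algebraMap A (Localization (nonZeroDivisors A)) r.1 * v := fun r v => by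
    rw [Algebra.smul_def,
      IsScalarTower.algebraMap_apply (A × B) A (Localization (nonZeroDivisors A))]
    rfl
  have hsmulD : ∀ (r : A × B) (x : ↥D),
      ((r • x : ↥D) : Localization (nonZeroDivisors (A × B))) =
        algebraMap (A × B) (Localization (nonZeroDivisors (A × B))) r * (x : _) := by
    intro r x
    rw [Subalgebra.coe_smul, Algebra.smul_def]
  have hefirst : ∀ (r : A × B) (x : Localization (nonZeroDivisors (A × B))),
      e (algebraMap (A × B) (Localization (nonZeroDivisors (A × B))) r * x) =
        (algebraMap A (Localization (nonZeroDivisors A)) r.1 * (e x).1,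
         algebraMap B (Localization (nonZeroDivisors B)) r.2 * (e x).2) := by
    intro r x
    rw [map_mul, e.commutes r]
    rfl
  let τ : ↥D →ₗ[A × B] ↥C :=
    { toFun := fun d => ⟨(e (d : Localization (nonZeroDivisors (A × B)))).1,
        ((memD d).mp d.2).1⟩
      map_add' := fun x y => Subtype.ext (by
        show (e ((x : Localization (nonZeroDivisors (A × B))) + y)).1 = (e x).1 + (e y).1
        rw [map_add]; rfl)
      map_smul' := fun r x => by
        simp only [RingHom.id_apply]
        apply Subtype.ext
        show (e ((r • x : ↥D) : Localization (nonZeroDivisors (A × B)))).1 =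
          r • (e (x : Localization (nonZeroDivisors (A × B)))).1
        rw [hsmulD, hefirst, hsmulLA] }
  have hτ : ∀ d : ↥D, (τ d : Localization (nonZeroDivisors A)) =
      (e (d : Localization (nonZeroDivisors (A × B)))).1 := fun d => rfl
  haveI : IsLocalizedModule (Submonoid.powers (((1 : A), (0 : B)) : A × B)) τ := by
    constructor
    · rintro ⟨s, hs⟩
      obtain ⟨n, rfl⟩ := hs
      have h5 : (algebraMap (A × B) (Module.End (A × B) ↥C))
          ((((1 : A), (0 : B)) : A × B) ^ n) = 1 := by
        apply LinearMap.ext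
        intro c
        rw [Module.algebraMap_end_apply, Module.End.one_apply, hsmulC]
        have h6 : ((((1 : A), (0 : B)) : A × B) ^ n).1 = 1 := by
          rw [show ((((1 : A), (0 : B)) : A × B) ^ n).1 =
            (RingHom.fst A B) ((((1 : A), (0 : B)) : A × B) ^ n) from rfl, map_pow]
          simp
        rw [h6, one_smul]
      have h5' : IsUnit ((algebraMap (A × B) (Module.End (A × B) ↥C))
          ((((1 : A), (0 : B)) : A × B) ^ n)) := by
        rw [h5]; exact isUnit_one
      exact h5'
    · intro y
      refine ⟨(⟨e.symm ((y : Localization (nonZeroDivisors A)), 0), ?_⟩, 1), ?_⟩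
      · rw [memD, AlgEquiv.apply_symm_apply]
        exact ⟨y.2, ⟨0, map_zero _⟩⟩
      · rw [one_smul]
        apply Subtype.ext
        rw [hτ]
        show (y : Localization (nonZeroDivisors A)) =
          (e (e.symm ((y : Localization (nonZeroDivisors A)), 0))).1
        rw [AlgEquiv.apply_symm_apply]
    · intro x₁ x₂ hx
      refine ⟨⟨((1 : A), (0 : B)), Submonoid.mem_powers _⟩, ?_⟩
      show (((1 : A), (0 : B)) : A × B) • x₁ = (((1 : A), (0 : B)) : A × B) • x₂
      apply Subtype.ext
      apply e.injective
      rw [hsmulD, hsmulD, hefirst, hefirst]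
      have h7 : (e (x₁ : Localization (nonZeroDivisors (A × B)))).1 =
          (e (x₂ : Localization (nonZeroDivisors (A × B)))).1 := by
        rw [← hτ, ← hτ, hx]
      rw [h7]
      simp
  exact Module.Flat.of_isLocalizedModule (R := A × B) (M := ↥D) (Mp := ↥C) (Rp := A)
    (Submonoid.powers (((1 : A), (0 : B)) : A × B)) τ
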